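/- Let c be a codeword of C_BC[2^{a+1}λ, λ, ω, ρ] over a field of characteristic 2, written as 2^{a+2}λ blocks c_1,…,c_{2^{a+2}λ}. Then the folded vector y with blocks y_j = c_j + c_{j + 2^{a+1}λ} (j ∈ [2^{a+1}λ]) is a codeword of C_BC[2^a λ, λ, ω, ρ] (with the same local parity check matrices W_1,…,W_λ). -/

import Mathlib

open Fin.NatCast

/-- Membership in the block circulant code `C_BC[M, λ, ω, ρ]` in its evaluation-code
form: data blocks `d i : Fin ω → F`, parity blocks `p i : Fin ρ → F`; for every `i` the
`i`-th local codeword (data blocks `d i, …, d (i+λ-1)` and parity block `p i`) is the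
evaluation of a message polynomial of degree `≤ λω - 1` at the evaluation points
`αo`/`αe`, with the point sets shared cyclically (with period `λ`) between consecutive
local codes. -/
def inBC {F : Type*} [Field F] (M lam ω ρ : ℕ) [NeZero M] [NeZero lam]
    (αo : Fin lam → Fin ω → F) (αe : Fin lam → Fin ρ → F)
    (d : Fin M → Fin ω → F) (p : Fin M → Fin ρ → F) : Prop :=
  ∀ i : Fin M, ∃ m : Polynomial F, m.natDegree ≤ lam * ω - 1 ∧
    (∀ (j : Fin lam) (s : Fin ω),
      d (i + ((j : ℕ) : Fin M)) s = m.eval (αo (((i : ℕ) : Fin lam) + j) s)) ∧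
    (∀ s : Fin ρ, p i s = m.eval (αe ((i : ℕ) : Fin lam) s))

/-- Let `c = (d, p)` be a codeword of `C_BC[2^{a+1}λ, λ, ω, ρ]` over a
field of characteristic 2. Then the folded vector `y` with blocks
`y_j = c_j + c_{j + 2^a λ·(blocks)}` (adding blocks half a period apart) is a codeword of
`C_BC[2^a λ, λ, ω, ρ]` with the same local parity checks (the same evaluation points). -/
theorem stmt19 {F : Type*} [Field F] [CharP F 2] {a lam ω ρ : ℕ} [NeZero lam]
    (M M' : ℕ) [NeZero M] [NeZero M']
    (hM : M = 2 ^ (a + 1) * lam) (hM' : M' = 2 ^ a * lam)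
    (αo : Fin lam → Fin ω → F) (αe : Fin lam → Fin ρ → F)
    (d : Fin M → Fin ω → F) (p : Fin M → Fin ρ → F)
    (hc : inBC M lam ω ρ αo αe d p)
    (yd : Fin M' → Fin ω → F) (yp : Fin M' → Fin ρ → F)
    (hyd : ∀ j : Fin M', yd j = d ((j : ℕ) : Fin M) + d ((((j : ℕ) + M' : ℕ)) : Fin M))
    (hyp : ∀ j : Fin M', yp j = p ((j : ℕ) : Fin M) + p ((((j : ℕ) + M' : ℕ)) : Fin M)) :
    inBC M' lam ω ρ αo αe yd yp := by
  have hlamM' : lam ≤ M' := by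
    rw [hM']; nlinarith [Nat.one_le_two_pow (n := a)]
  have h2M : M = 2 * M' := by rw [hM, hM']; ring
  have hM'pos : 0 < M' := Nat.pos_of_ne_zero (NeZero.ne M')
  have hdvd : lam ∣ M' := ⟨2 ^ a, by rw [hM']; ring⟩
  clear hM hM'
  intro i
  have hi : (i : ℕ) < M' := i.isLt
  obtain ⟨m1, hdeg1, hd1, hp1⟩ := hc (((i : ℕ) : Fin M))
  obtain ⟨m2, hdeg2, hd2, hp2⟩ := hc ((((i : ℕ) + M' : ℕ) : Fin M))
  have hiv : (((i : ℕ) : Fin M) : ℕ) = (i : ℕ) := Fin.val_cast_of_lt (by omega)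
  have hiv2 : ((((i : ℕ) + M' : ℕ) : Fin M) : ℕ) = (i : ℕ) + M' :=
    Fin.val_cast_of_lt (by omega)
  have hlam1 : ((((i : ℕ) : Fin M) : ℕ) : Fin lam) = (((i : ℕ) : Fin lam)) := by
    rw [hiv]
  have hlam2 : (((((i : ℕ) + M' : ℕ) : Fin M) : ℕ) : Fin lam) = (((i : ℕ) : Fin lam)) := by
    rw [hiv2]
    obtain ⟨c, hc'⟩ := hdvd
    push_cast [hc', Fin.natCast_self]
    exact Fin.ext (by simp [Fin.val_add, Fin.val_natCast, Nat.mul_mod_right])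
  refine ⟨m1 + m2, ?_, ?_, ?_⟩
  · exact le_trans (Polynomial.natDegree_add_le _ _) (max_le hdeg1 hdeg2)
  · intro j s
    have hj : (j : ℕ) < lam := j.isLt
    have key1 := hd1 j s
    have key2 := hd2 j s
    rw [hlam1] at key1
    rw [hlam2] at key2
    set k : Fin M' := i + ((j : ℕ) : Fin M') with hk
    have hkv : (k : ℕ) = ((i : ℕ) + (j : ℕ)) % M' := by
      rw [hk, Fin.add_def, Fin.val_cast_of_lt (show (j : ℕ) < M' by omega)]
    have hy := congrFun (hyd k) s
    rw [hy]
    by_cases hcase : (i : ℕ) + (j : ℕ) < M'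
    · have hkv' : (k : ℕ) = (i : ℕ) + (j : ℕ) := by
        rw [hkv, Nat.mod_eq_of_lt hcase]
      have e1 : (((k : ℕ) : ℕ) : Fin M) = ((i : ℕ) : Fin M) + ((j : ℕ) : Fin M) := by
        apply Fin.ext
        rw [Fin.val_cast_of_lt (show ((k : ℕ) : ℕ) < M by omega), Fin.add_def, hiv,
          Fin.val_cast_of_lt (show (j : ℕ) < M by omega)]
        show _ = (_ + _) % M
        rw [Nat.mod_eq_of_lt (by omega)]
        omega
      have e2 : ((((k : ℕ) + M') : ℕ) : Fin M)
          = (((i : ℕ) + M' : ℕ) : Fin M) + ((j : ℕ) : Fin M) := by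
        apply Fin.ext
        rw [Fin.val_cast_of_lt (show ((k : ℕ) + M') < M by omega), Fin.add_def, hiv2,
          Fin.val_cast_of_lt (show (j : ℕ) < M by omega)]
        show _ = (_ + _) % M
        rw [Nat.mod_eq_of_lt (by omega)]
        omega
      simp only [Pi.add_apply, e1, e2, key1, key2, Polynomial.eval_add]
    · have hkv' : (k : ℕ) = (i : ℕ) + (j : ℕ) - M' := by
        rw [hkv, Nat.mod_eq_sub_mod (by omega), Nat.mod_eq_of_lt (by omega)]
      have e1 : (((k : ℕ) : ℕ) : Fin M)
          = (((i : ℕ) + M' : ℕ) : Fin M) + ((j : ℕ) : Fin M) := by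
        apply Fin.ext
        rw [Fin.val_cast_of_lt (show ((k : ℕ) : ℕ) < M by omega), Fin.add_def, hiv2,
          Fin.val_cast_of_lt (show (j : ℕ) < M by omega)]
        show _ = (_ + _) % M
        rw [Nat.mod_eq_sub_mod (by omega), Nat.mod_eq_of_lt (by omega)]
        omega
      have e2 : ((((k : ℕ) + M') : ℕ) : Fin M)
          = ((i : ℕ) : Fin M) + ((j : ℕ) : Fin M) := by
        apply Fin.ext
        rw [Fin.val_cast_of_lt (show ((k : ℕ) + M') < M by omega), Fin.add_def, hiv,
          Fin.val_cast_of_lt (show (j : ℕ) < M by omega)]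
        show _ = (_ + _) % M
        rw [Nat.mod_eq_of_lt (by omega)]
        omega
      simp only [Pi.add_apply, e1, e2, key1, key2, Polynomial.eval_add]
      ring
  · intro s
    have key1 := hp1 s
    have key2 := hp2 s
    rw [hlam1] at key1
    rw [hlam2] at key2
    have hy := congrFun (hyp i) s
    rw [hy]
    simp only [Pi.add_apply, key1, key2, Polynomial.eval_add]
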